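/- arXiv:2305.02165 — 8 statements merged into one kernel-verified Lean document; each statement's English description precedes it below -/
import Mathlib

section
/- Let L(x, λ) be convex in x and concave in λ, and let P be a symmetric positive semi-definite matrix on R^{n+m}. Suppose iterates z^k = (x^k, λ^k) satisfy P(z^k - z^{k+1}) ∈ F(z^{k+1}), where F(x, λ) = (∂_x L(x, λ), -∂_λ L(x, λ)). Then for any fixed (x, λ) and each k ≥ 0: L(x^{k+1}, λ) - L(x, λ^{k+1}) ≤ (1/2)‖z^k - z‖²_P - (1/2)‖z^{k+1} - z‖²_P. -/
open Matrix

/-- `g` is a subgradient of `f` at `x`. -/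
def IsSubgradAt {ι : Type*} [Fintype ι] (f : (ι → ℝ) → ℝ) (x g : ι → ℝ) : Prop :=
  ∀ y, f x + g ⬝ᵥ (y - x) ≤ f y

/-- One step of the generic update `P(z^k - z^{k+1}) ∈ F(z^{k+1})` satisfies
`L(x^{k+1},λ) - L(x,λ^{k+1}) ≤ ½‖z^k-z‖²_P - ½‖z^{k+1}-z‖²_P`. -/
theorem one_step_generic {n m : ℕ} (L : (Fin n → ℝ) → (Fin m → ℝ) → ℝ)
    (P : Matrix (Fin n ⊕ Fin m) (Fin n ⊕ Fin m) ℝ) (hP : P.PosSemidef)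
    (xk xk1 : Fin n → ℝ) (lk lk1 : Fin m → ℝ)
    (hgx : IsSubgradAt (fun x => L x lk1) xk1
      (fun i => (P *ᵥ (Sum.elim xk lk - Sum.elim xk1 lk1)) (Sum.inl i)))
    (hgl : IsSubgradAt (fun l => -L xk1 l) lk1
      (fun j => (P *ᵥ (Sum.elim xk lk - Sum.elim xk1 lk1)) (Sum.inr j)))
    (x : Fin n → ℝ) (lam : Fin m → ℝ) :
    L xk1 lam - L x lk1
      ≤ (1/2) * ((Sum.elim xk lk - Sum.elim x lam) ⬝ᵥ (P *ᵥ (Sum.elim xk lk - Sum.elim x lam)))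
        - (1/2) * ((Sum.elim xk1 lk1 - Sum.elim x lam)
            ⬝ᵥ (P *ᵥ (Sum.elim xk1 lk1 - Sum.elim x lam))) := by
  set a : (Fin n ⊕ Fin m) → ℝ := Sum.elim xk lk with ha
  set b : (Fin n ⊕ Fin m) → ℝ := Sum.elim xk1 lk1 with hb
  set c : (Fin n ⊕ Fin m) → ℝ := Sum.elim x lam with hc
  set w : (Fin n ⊕ Fin m) → ℝ := P *ᵥ (a - b) with hw
  have hsymm : ∀ u v : (Fin n ⊕ Fin m) → ℝ, u ⬝ᵥ (P *ᵥ v) = v ⬝ᵥ (P *ᵥ u) := by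
    intro u v
    have hPt : Pᵀ = P := by
      have h := hP.1.eq
      simpa [Matrix.conjTranspose, Matrix.map, Matrix.transpose] using h
    rw [Matrix.dotProduct_mulVec, ← Matrix.mulVec_transpose, hPt, dotProduct_comm]
  -- Step 1: subgradient inequalities give L xk1 lam - L x lk1 ≤ w ⬝ᵥ (b - c)
  have h1 := hgx x
  have h2 := hgl lam
  simp only at h1 h2
  have hdot : (fun i => w (Sum.inl i)) ⬝ᵥ (x - xk1) + (fun j => w (Sum.inr j)) ⬝ᵥ (lam - lk1)
      = w ⬝ᵥ (c - b) := by
    simp [dotProduct, Fintype.sum_sum_type, hc, hb]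
  have hstep1 : L xk1 lam - L x lk1 ≤ w ⬝ᵥ (b - c) := by
    have heq : w ⬝ᵥ (b - c) = -(w ⬝ᵥ (c - b)) := by
      rw [show b - c = -(c - b) by abel, dotProduct_neg]
    rw [heq, ← hdot]
    linarith
  -- Step 2: w ⬝ᵥ (b - c) ≤ RHS
  have hpsd : 0 ≤ (a - b) ⬝ᵥ (P *ᵥ (a - b)) := by simpa using hP.dotProduct_mulVec_nonneg (a - b)
  have hexp : a - c = (a - b) + (b - c) := by abel
  have key : (a - c) ⬝ᵥ (P *ᵥ (a - c)) - (b - c) ⬝ᵥ (P *ᵥ (b - c))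
      - 2 * (w ⬝ᵥ (b - c)) = (a - b) ⬝ᵥ (P *ᵥ (a - b)) := by
    have hw' : w ⬝ᵥ (b - c) = (b - c) ⬝ᵥ (P *ᵥ (a - b)) := by
      rw [hw, dotProduct_comm]
    rw [hexp, hw']
    rw [Matrix.mulVec_add, dotProduct_add, add_dotProduct,
      add_dotProduct]
    have := hsymm (a - b) (b - c)
    linarith
  linarith
end

section
/- Under the setting of the generic proximal update P(z^k - z^{k+1}) ∈ F(z^{k+1}) with P symmetric positive semi-definite and L convex-concave, the ergodic averages x̄^k = (1/k)∑_{i=1}^k x^i and λ̄^k = (1/k)∑_{i=1}^k λ^i satisfy, for any (x, λ): L(x̄^k, λ) - L(x, λ̄^k) ≤ ‖z - z^0‖²_P / (2k). -/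
open Matrix Finset

/-- `O(1/k)` ergodic rate of the generic update `P(z^k - z^{k+1}) ∈ F(z^{k+1})`. -/
theorem ergodic_rate_generic {n m : ℕ} (L : (Fin n → ℝ) → (Fin m → ℝ) → ℝ)
    (hcvx : ∀ lam, ConvexOn ℝ Set.univ (fun x => L x lam))
    (hccv : ∀ x, ConcaveOn ℝ Set.univ (fun lam => L x lam))
    (P : Matrix (Fin n ⊕ Fin m) (Fin n ⊕ Fin m) ℝ) (hP : P.PosSemidef)
    (xs : ℕ → Fin n → ℝ) (ls : ℕ → Fin m → ℝ)
    (hgx : ∀ k, IsSubgradAt (fun x => L x (ls (k+1))) (xs (k+1))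
      (fun i => (P *ᵥ (Sum.elim (xs k) (ls k) - Sum.elim (xs (k+1)) (ls (k+1)))) (Sum.inl i)))
    (hgl : ∀ k, IsSubgradAt (fun l => -L (xs (k+1)) l) (ls (k+1))
      (fun j => (P *ᵥ (Sum.elim (xs k) (ls k) - Sum.elim (xs (k+1)) (ls (k+1)))) (Sum.inr j)))
    (k : ℕ) (hk : 1 ≤ k) (x : Fin n → ℝ) (lam : Fin m → ℝ) :
    L ((k : ℝ)⁻¹ • ∑ i ∈ range k, xs (i+1)) lam
      - L x ((k : ℝ)⁻¹ • ∑ i ∈ range k, ls (i+1))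
      ≤ ((Sum.elim x lam - Sum.elim (xs 0) (ls 0))
          ⬝ᵥ (P *ᵥ (Sum.elim x lam - Sum.elim (xs 0) (ls 0)))) / (2 * k) := by
  have hk0 : (0:ℝ) < (k:ℝ) := by exact_mod_cast hk
  set z : Fin n ⊕ Fin m → ℝ := Sum.elim x lam with hz
  set Z : ℕ → Fin n ⊕ Fin m → ℝ := fun i => Sum.elim (xs i) (ls i) with hZ
  -- symmetry of the bilinear form
  have hsymm : ∀ u v : Fin n ⊕ Fin m → ℝ, u ⬝ᵥ (P *ᵥ v) = v ⬝ᵥ (P *ᵥ u) := by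
    intro u v
    rw [dotProduct_mulVec, ← mulVec_transpose]
    have : Pᵀ = P := by
      have := hP.1.eq
      rwa [Matrix.conjTranspose_eq_transpose_of_trivial] at this
    rw [this, dotProduct_comm]
  have hnonneg : ∀ u : Fin n ⊕ Fin m → ℝ, 0 ≤ u ⬝ᵥ (P *ᵥ u) := by
    intro u
    have := hP.dotProduct_mulVec_nonneg u
    simpa using this
  -- splitting a dot product over the sum type
  have hdot : ∀ (v : (Fin n ⊕ Fin m) → ℝ) (a c : Fin n → ℝ) (b d : Fin m → ℝ),
      v ⬝ᵥ (Sum.elim a b - Sum.elim c d)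
        = (fun i => v (Sum.inl i)) ⬝ᵥ (a - c) + (fun j => v (Sum.inr j)) ⬝ᵥ (b - d) := by
    intro v a c b d
    simp [dotProduct, Fintype.sum_sum_type]
  -- per-step inequality
  have hstep : ∀ i : ℕ, L (xs (i+1)) lam - L x (ls (i+1))
      ≤ ((z - Z i) ⬝ᵥ (P *ᵥ (z - Z i)) - (z - Z (i+1)) ⬝ᵥ (P *ᵥ (z - Z (i+1)))) / 2 := by
    intro i
    have h1 := hgx i x
    have h2 := hgl i lam
    simp only at h1 h2
    set d : Fin n ⊕ Fin m → ℝ := Z i - Z (i+1) with hd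
    have hsum : L (xs (i+1)) lam - L x (ls (i+1)) ≤ (P *ᵥ d) ⬝ᵥ (Z (i+1) - z) := by
      have hcomb : (fun i_1 => (P *ᵥ d) (Sum.inl i_1)) ⬝ᵥ (x - xs (i+1))
          + (fun j => (P *ᵥ d) (Sum.inr j)) ⬝ᵥ (lam - ls (i+1))
          = (P *ᵥ d) ⬝ᵥ (z - Z (i+1)) := by
        rw [hz, hZ, hdot]
      have := add_le_add h1 h2
      have h3 : (P *ᵥ d) ⬝ᵥ (Z (i+1) - z) = -((P *ᵥ d) ⬝ᵥ (z - Z (i+1))) := by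
        rw [← dotProduct_neg]; congr 1; abel
      rw [h3, ← hcomb]
      linarith
    have hiden : (z - Z i) ⬝ᵥ (P *ᵥ (z - Z i)) - (z - Z (i+1)) ⬝ᵥ (P *ᵥ (z - Z (i+1)))
        = 2 * ((P *ᵥ d) ⬝ᵥ (Z (i+1) - z)) + d ⬝ᵥ (P *ᵥ d) := by
      have hc : (P *ᵥ d) ⬝ᵥ (Z (i+1) - z) = (Z (i+1) - z) ⬝ᵥ (P *ᵥ d) := dotProduct_comm _ _
      rw [hc, hd]
      simp only [sub_dotProduct, dotProduct_sub, Matrix.mulVec_sub]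
      linear_combination (hsymm z (Z i)) - (hsymm z (Z (i+1))) + (hsymm (Z i) (Z (i+1)))
    have hdd := hnonneg d
    linarith [hsum]
  -- telescoping sum
  have htel : ∑ i ∈ range k, (L (xs (i+1)) lam - L x (ls (i+1)))
      ≤ (z - Z 0) ⬝ᵥ (P *ᵥ (z - Z 0)) / 2 := by
    have h1 : ∑ i ∈ range k, (L (xs (i+1)) lam - L x (ls (i+1)))
        ≤ ∑ i ∈ range k,
            (((z - Z i) ⬝ᵥ (P *ᵥ (z - Z i)) - (z - Z (i+1)) ⬝ᵥ (P *ᵥ (z - Z (i+1)))) / 2) :=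
      Finset.sum_le_sum fun i _ => hstep i
    have h2 : ∑ i ∈ range k,
          (((z - Z i) ⬝ᵥ (P *ᵥ (z - Z i)) - (z - Z (i+1)) ⬝ᵥ (P *ᵥ (z - Z (i+1)))) / 2)
        = ((z - Z 0) ⬝ᵥ (P *ᵥ (z - Z 0)) - (z - Z k) ⬝ᵥ (P *ᵥ (z - Z k))) / 2 := by
      rw [← Finset.sum_div, Finset.sum_range_sub' (fun i => (z - Z i) ⬝ᵥ (P *ᵥ (z - Z i)))]
    have h3 := hnonneg (z - Z k)
    linarith
  -- Jensen
  have hw0 : ∀ i ∈ range k, (0:ℝ) ≤ (k:ℝ)⁻¹ := fun _ _ => by positivity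
  have hw1 : ∑ _i ∈ range k, (k:ℝ)⁻¹ = 1 := by
    rw [Finset.sum_const, card_range, nsmul_eq_mul, mul_inv_cancel₀ (ne_of_gt hk0)]
  have hmem : ∀ (γ : Type) (f : ℕ → γ), ∀ i ∈ range k, f i ∈ (Set.univ : Set γ) :=
    fun _ _ _ _ => Set.mem_univ _
  have hjx : L ((k : ℝ)⁻¹ • ∑ i ∈ range k, xs (i+1)) lam
      ≤ (k:ℝ)⁻¹ * ∑ i ∈ range k, L (xs (i+1)) lam := by
    have := (hcvx lam).map_sum_le hw0 hw1 (fun i _ => Set.mem_univ (xs (i+1)))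
    rw [Finset.smul_sum]
    simpa [smul_eq_mul, Finset.mul_sum] using this
  have hjl : (k:ℝ)⁻¹ * ∑ i ∈ range k, L x (ls (i+1))
      ≤ L x ((k : ℝ)⁻¹ • ∑ i ∈ range k, ls (i+1)) := by
    have := (hccv x).le_map_sum hw0 hw1 (fun i _ => Set.mem_univ (ls (i+1)))
    rw [Finset.smul_sum]
    simpa [smul_eq_mul, Finset.mul_sum] using this
  have hfin : (k:ℝ)⁻¹ * ∑ i ∈ range k, (L (xs (i+1)) lam - L x (ls (i+1)))
      ≤ (z - Z 0) ⬝ᵥ (P *ᵥ (z - Z 0)) / (2 * k) := by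
    have hmul := mul_le_mul_of_nonneg_left htel (le_of_lt (inv_pos.2 hk0))
    calc (k:ℝ)⁻¹ * ∑ i ∈ range k, (L (xs (i+1)) lam - L x (ls (i+1)))
        ≤ (k:ℝ)⁻¹ * ((z - Z 0) ⬝ᵥ (P *ᵥ (z - Z 0)) / 2) := hmul
      _ = (z - Z 0) ⬝ᵥ (P *ᵥ (z - Z 0)) / (2 * k) := by
          rw [mul_comm, ← div_eq_mul_inv, div_div]
  have hsub : ∑ i ∈ range k, (L (xs (i+1)) lam - L x (ls (i+1)))
      = ∑ i ∈ range k, L (xs (i+1)) lam - ∑ i ∈ range k, L x (ls (i+1)) :=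
    Finset.sum_sub_distrib _ _
  rw [hsub, mul_sub] at hfin
  have : L ((k : ℝ)⁻¹ • ∑ i ∈ range k, xs (i+1)) lam
      - L x ((k : ℝ)⁻¹ • ∑ i ∈ range k, ls (i+1))
      ≤ (k:ℝ)⁻¹ * ∑ i ∈ range k, L (xs (i+1)) lam
        - (k:ℝ)⁻¹ * ∑ i ∈ range k, L x (ls (i+1)) := by linarith
  calc _ ≤ _ := this
    _ ≤ _ := hfin
end

section
/- Consider ADMM for min f(x) + g(y) s.t. Ax + By = b, with updates y^{k+1} = argmin_y { g(y) - ⟨Bᵀλ^k, y⟩ + (η/2)‖Ax^k + By - b‖² }, λ^{k+1} = λ^k - η(Ax^k + By^{k+1} - b), x^{k+1} = argmin_x { f(x) - ⟨Aᵀλ^{k+1}, x⟩ + (η/2)‖Ax + By^{k+1} - b‖² }. Then with z = (y, x, λ) and F(z) = (∂g(y) - Bᵀλ, ∂f(x) - Aᵀλ, Ax + By - b), the iterates satisfy P(z^k - z^{k+1}) ∈ F(z^{k+1}) where P = [[0,0,0],[0, ηAᵀA, -Aᵀ],[0, -A, (1/η)I]]. -/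
open Matrix

lemma subgrad_of_min {ι κ : Type*} [Fintype ι] [Fintype κ]
    (g : (ι → ℝ) → ℝ) (hg : ConvexOn ℝ Set.univ g)
    (M : Matrix κ ι ℝ) (c : ι → ℝ) (d : κ → ℝ) (η : ℝ) (hη : 0 < η) (y0 : ι → ℝ)
    (hmin : ∀ y, g y0 - c ⬝ᵥ y0 + (η/2) * ((M *ᵥ y0 - d) ⬝ᵥ (M *ᵥ y0 - d))
      ≤ g y - c ⬝ᵥ y + (η/2) * ((M *ᵥ y - d) ⬝ᵥ (M *ᵥ y - d))) :
    IsSubgradAt g y0 (c - η • (Mᵀ *ᵥ (M *ᵥ y0 - d))) := by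
  intro y
  set w := y - y0 with hw
  set u := M *ᵥ y0 - d with hu
  set v := M *ᵥ w with hv
  have hgrad : (c - η • (Mᵀ *ᵥ u)) ⬝ᵥ w = c ⬝ᵥ w - η * (u ⬝ᵥ v) := by
    rw [sub_dotProduct, smul_dotProduct, smul_eq_mul, hv,
      mulVec_transpose, ← dotProduct_mulVec]
  have hq : 0 ≤ v ⬝ᵥ v := by
    apply Finset.sum_nonneg; intro i _; exact mul_self_nonneg _
  have key : ∀ t : ℝ, 0 < t → t ≤ 1 →
      g y0 + c ⬝ᵥ w - η * (u ⬝ᵥ v) ≤ g y + (η/2) * t * (v ⬝ᵥ v) := by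
    intro t ht ht1
    have h1 := hmin (y0 + t • w)
    have hconv : g (y0 + t • w) ≤ (1 - t) * g y0 + t * g y := by
      have := hg.2 (Set.mem_univ y0) (Set.mem_univ y) (by linarith : (0:ℝ) ≤ 1 - t)
        (le_of_lt ht) (by ring)
      simpa [smul_eq_mul, hw] using (by
        have heq : (1 - t) • y0 + t • y = y0 + t • w := by
          funext i; simp [hw]; ring
        rw [heq] at this; exact this)
    have hMv : M *ᵥ (y0 + t • w) - d = u + t • v := by
      rw [mulVec_add, mulVec_smul, hu, hv]; abel
    have hQ : (M *ᵥ (y0 + t • w) - d) ⬝ᵥ (M *ᵥ (y0 + t • w) - d)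
        = u ⬝ᵥ u + 2 * t * (u ⬝ᵥ v) + t^2 * (v ⬝ᵥ v) := by
      rw [hMv, add_dotProduct, dotProduct_add, dotProduct_add, smul_dotProduct,
        dotProduct_smul, dotProduct_smul, dotProduct_comm v u]
      simp [smul_eq_mul]; ring
    have hc : c ⬝ᵥ (y0 + t • w) = c ⬝ᵥ y0 + t * (c ⬝ᵥ w) := by
      rw [dotProduct_add, dotProduct_smul, smul_eq_mul]
    rw [hQ, hc] at h1
    have h2 : t * (g y0 + c ⬝ᵥ w - η * (u ⬝ᵥ v)) ≤ t * (g y + (η/2) * t * (v ⬝ᵥ v)) := by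
      nlinarith [h1, hconv]
    exact le_of_mul_le_mul_left (by linarith) ht
  have hmain : g y0 + c ⬝ᵥ w - η * (u ⬝ᵥ v) ≤ g y := by
    apply le_of_forall_pos_le_add
    intro ε hε
    set C := (η/2) * (v ⬝ᵥ v) with hC
    have hC0 : 0 ≤ C := mul_nonneg (by linarith) hq
    have ht : 0 < min 1 (ε / (C + 1)) := by
      apply lt_min one_pos; positivity
    have := key _ ht (min_le_left _ _)
    have hle : (η/2) * min 1 (ε / (C + 1)) * (v ⬝ᵥ v) ≤ ε := by
      have h3 : min 1 (ε / (C + 1)) * C ≤ (ε / (C + 1)) * (C + 1) := by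
        apply mul_le_mul (min_le_right _ _) (by linarith) hC0 (by positivity)
      rw [div_mul_cancel₀] at h3
      · calc (η/2) * min 1 (ε / (C + 1)) * (v ⬝ᵥ v)
            = min 1 (ε / (C + 1)) * C := by rw [hC]; ring
          _ ≤ ε := h3
      · positivity
    linarith
  rw [hgrad] at *
  linarith
/-- ADMM is an instance of the generic update `P(z^k - z^{k+1}) ∈ F(z^{k+1})` with
`z = (y, x, λ)` and `P = [[0,0,0],[0, ηAᵀA, -Aᵀ],[0, -A, (1/η)I]]`. -/
theorem admm_is_generic {p n m : ℕ} (f : (Fin n → ℝ) → ℝ) (g : (Fin p → ℝ) → ℝ)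
    (hf : ConvexOn ℝ Set.univ f) (hg : ConvexOn ℝ Set.univ g)
    (A : Matrix (Fin m) (Fin n) ℝ) (B : Matrix (Fin m) (Fin p) ℝ) (b : Fin m → ℝ)
    (η : ℝ) (hη : 0 < η)
    (yk yk1 : Fin p → ℝ) (xk xk1 : Fin n → ℝ) (lk lk1 : Fin m → ℝ)
    (hy : ∀ y, g yk1 - (Bᵀ *ᵥ lk) ⬝ᵥ yk1
        + (η/2) * ((A *ᵥ xk + B *ᵥ yk1 - b) ⬝ᵥ (A *ᵥ xk + B *ᵥ yk1 - b))
      ≤ g y - (Bᵀ *ᵥ lk) ⬝ᵥ y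
        + (η/2) * ((A *ᵥ xk + B *ᵥ y - b) ⬝ᵥ (A *ᵥ xk + B *ᵥ y - b)))
    (hlam : lk1 = lk - η • (A *ᵥ xk + B *ᵥ yk1 - b))
    (hx : ∀ x, f xk1 - (Aᵀ *ᵥ lk1) ⬝ᵥ xk1
        + (η/2) * ((A *ᵥ xk1 + B *ᵥ yk1 - b) ⬝ᵥ (A *ᵥ xk1 + B *ᵥ yk1 - b))
      ≤ f x - (Aᵀ *ᵥ lk1) ⬝ᵥ x
        + (η/2) * ((A *ᵥ x + B *ᵥ yk1 - b) ⬝ᵥ (A *ᵥ x + B *ᵥ yk1 - b))) :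
    ∃ gg gf, IsSubgradAt g yk1 gg ∧ IsSubgradAt f xk1 gf ∧
      (fromBlocks (0 : Matrix (Fin p) (Fin p) ℝ) (0 : Matrix (Fin p) (Fin n ⊕ Fin m) ℝ)
          (0 : Matrix (Fin n ⊕ Fin m) (Fin p) ℝ)
          (fromBlocks (η • (Aᵀ * A)) (-Aᵀ) (-A) ((1/η) • (1 : Matrix (Fin m) (Fin m) ℝ))))
        *ᵥ (Sum.elim yk (Sum.elim xk lk) - Sum.elim yk1 (Sum.elim xk1 lk1))
      = Sum.elim (gg - Bᵀ *ᵥ lk1)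
          (Sum.elim (gf - Aᵀ *ᵥ lk1) (A *ᵥ xk1 + B *ᵥ yk1 - b)) := by
  -- rewrite residuals
  have hresy : ∀ y : Fin p → ℝ, A *ᵥ xk + B *ᵥ y - b = B *ᵥ y - (b - A *ᵥ xk) := by
    intro y; abel
  have hresx : ∀ x : Fin n → ℝ, A *ᵥ x + B *ᵥ yk1 - b = A *ᵥ x - (b - B *ᵥ yk1) := by
    intro x; abel
  have hy' : ∀ y, g yk1 - (Bᵀ *ᵥ lk) ⬝ᵥ yk1
      + (η/2) * ((B *ᵥ yk1 - (b - A *ᵥ xk)) ⬝ᵥ (B *ᵥ yk1 - (b - A *ᵥ xk)))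
    ≤ g y - (Bᵀ *ᵥ lk) ⬝ᵥ y
      + (η/2) * ((B *ᵥ y - (b - A *ᵥ xk)) ⬝ᵥ (B *ᵥ y - (b - A *ᵥ xk))) := by
    intro y; have := hy y; rwa [hresy yk1, hresy y] at this
  have hx' : ∀ x, f xk1 - (Aᵀ *ᵥ lk1) ⬝ᵥ xk1
      + (η/2) * ((A *ᵥ xk1 - (b - B *ᵥ yk1)) ⬝ᵥ (A *ᵥ xk1 - (b - B *ᵥ yk1)))
    ≤ f x - (Aᵀ *ᵥ lk1) ⬝ᵥ x
      + (η/2) * ((A *ᵥ x - (b - B *ᵥ yk1)) ⬝ᵥ (A *ᵥ x - (b - B *ᵥ yk1))) := by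
    intro x; have := hx x; rwa [hresx xk1, hresx x] at this
  have hgsub := subgrad_of_min g hg B (Bᵀ *ᵥ lk) (b - A *ᵥ xk) η hη yk1 hy'
  have hfsub := subgrad_of_min f hf A (Aᵀ *ᵥ lk1) (b - B *ᵥ yk1) η hη xk1 hx'
  refine ⟨_, _, hgsub, hfsub, ?_⟩
  have hsub : Sum.elim yk (Sum.elim xk lk) - Sum.elim yk1 (Sum.elim xk1 lk1)
      = Sum.elim (yk - yk1) (Sum.elim (xk - xk1) (lk - lk1)) := by
    funext i; rcases i with i | i
    · simp
    · rcases i with i | i <;> simp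
  have hlkdiff : lk - lk1 = η • (A *ᵥ xk + B *ᵥ yk1 - b) := by
    rw [hlam]; abel
  rw [hsub, fromBlocks_mulVec, fromBlocks_mulVec]
  simp only [Sum.elim_comp_inl, Sum.elim_comp_inr, zero_mulVec, zero_add, one_div]
  have hgg : Bᵀ *ᵥ lk - η • (Bᵀ *ᵥ (B *ᵥ yk1 - (b - A *ᵥ xk))) = Bᵀ *ᵥ lk1 := by
    simp only [hlam, mulVec_sub, mulVec_smul, mulVec_add]
    module
  refine congrArg₂ Sum.elim ?_ (congrArg₂ Sum.elim ?_ ?_)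
  · rw [hgg]; simp
  · simp only [hlkdiff, neg_mulVec, Matrix.smul_mulVec, ← Matrix.mulVec_mulVec,
      mulVec_sub, mulVec_smul, mulVec_add]
    module
  · have h1 : (η⁻¹ • (1 : Matrix (Fin m) (Fin m) ℝ)) *ᵥ (lk - lk1)
        = A *ᵥ xk + B *ᵥ yk1 - b := by
      rw [hlkdiff, Matrix.smul_mulVec, one_mulVec, smul_smul,
        inv_mul_cancel₀ (ne_of_gt hη), one_smul]
    rw [h1, neg_mulVec, mulVec_sub]
    abel
end

section
/- Ergodic rate of PDHG: with 0 < η ≤ 1/‖A‖₂ and L(x,λ) = f(x) - λᵀAx - g*(λ), the PDHG ergodic averages satisfy L(x̄^k, λ) - L(x, λ̄^k) ≤ ‖z - z^0‖²_P / (2k), where P = [[ (1/η)I, Aᵀ ], [ A, (1/η)I ]] and ‖u‖²_P = uᵀPu. -/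
open Matrix Finset

/-- The ℓ₂ operator (spectral) norm of a matrix. -/
noncomputable def matrixSpectralNorm {m n : ℕ} (A : Matrix (Fin m) (Fin n) ℝ) : ℝ :=
  ‖LinearMap.toContinuousLinearMap (Matrix.toEuclideanLin A)‖

lemma dot_mulVec_le {m n : ℕ} (A : Matrix (Fin m) (Fin n) ℝ) (a : Fin n → ℝ) (b : Fin m → ℝ) :
    b ⬝ᵥ (A *ᵥ a) ≤ matrixSpectralNorm A * (Real.sqrt (a ⬝ᵥ a) * Real.sqrt (b ⬝ᵥ b)) := by
  set a' : EuclideanSpace ℝ (Fin n) := (WithLp.equiv 2 _).symm a with ha'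
  set b' : EuclideanSpace ℝ (Fin m) := (WithLp.equiv 2 _).symm b with hb'
  have hna : Real.sqrt (a ⬝ᵥ a) = ‖a'‖ := by
    have : a ⬝ᵥ a = ‖a'‖ ^ 2 := by
      rw [← real_inner_self_eq_norm_sq]
      rw [ha', WithLp.equiv_symm_apply, EuclideanSpace.inner_toLp_toLp]
      simp
    rw [this, Real.sqrt_sq (norm_nonneg _)]
  have hnb : Real.sqrt (b ⬝ᵥ b) = ‖b'‖ := by
    have : b ⬝ᵥ b = ‖b'‖ ^ 2 := by
      rw [← real_inner_self_eq_norm_sq]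
      rw [hb', WithLp.equiv_symm_apply, EuclideanSpace.inner_toLp_toLp]
      simp
    rw [this, Real.sqrt_sq (norm_nonneg _)]
  have hinner : b ⬝ᵥ (A *ᵥ a) = inner ℝ b' (Matrix.toEuclideanLin A a') := by
    rw [ha', hb', WithLp.equiv_symm_apply, Matrix.toEuclideanLin_apply_piLp_toLp,
      EuclideanSpace.inner_toLp_toLp]
    simp [dotProduct_comm]
  rw [hinner, hna, hnb]
  calc inner ℝ b' (Matrix.toEuclideanLin A a')
      ≤ ‖b'‖ * ‖Matrix.toEuclideanLin A a'‖ := real_inner_le_norm _ _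
    _ ≤ ‖b'‖ * (matrixSpectralNorm A * ‖a'‖) := by
        apply mul_le_mul_of_nonneg_left _ (norm_nonneg _)
        have := (LinearMap.toContinuousLinearMap (Matrix.toEuclideanLin A)).le_opNorm a'
        simpa [matrixSpectralNorm] using this
    _ = matrixSpectralNorm A * (‖a'‖ * ‖b'‖) := by ring

lemma transpose_dot {m n : ℕ} (A : Matrix (Fin m) (Fin n) ℝ) (p : Fin n → ℝ) (q : Fin m → ℝ) :
    p ⬝ᵥ (Aᵀ *ᵥ q) = q ⬝ᵥ (A *ᵥ p) := by
  rw [Matrix.dotProduct_mulVec, Matrix.vecMul_transpose, dotProduct_comm]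

lemma psd_quad {m n : ℕ} (A : Matrix (Fin m) (Fin n) ℝ) (η : ℝ)
    (hA : matrixSpectralNorm A ≤ 1 / η) (u : Fin n ⊕ Fin m → ℝ) :
    0 ≤ u ⬝ᵥ ((fromBlocks ((1/η) • (1 : Matrix (Fin n) (Fin n) ℝ)) Aᵀ A
      ((1/η) • (1 : Matrix (Fin m) (Fin m) ℝ))) *ᵥ u) := by
  set a : Fin n → ℝ := u ∘ Sum.inl with haa
  set b : Fin m → ℝ := u ∘ Sum.inr with hbb
  have hu : u = Sum.elim a b := by
    funext i; cases i <;> rfl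
  have hq : u ⬝ᵥ ((fromBlocks ((1/η) • (1 : Matrix (Fin n) (Fin n) ℝ)) Aᵀ A
      ((1/η) • (1 : Matrix (Fin m) (Fin m) ℝ))) *ᵥ u)
      = (1/η) * (a ⬝ᵥ a) + (1/η) * (b ⬝ᵥ b) + 2 * (b ⬝ᵥ (A *ᵥ a)) := by
    rw [Matrix.fromBlocks_mulVec]
    conv_lhs => rw [hu]
    rw [sumElim_dotProduct_sumElim, Sum.elim_comp_inl, Sum.elim_comp_inr,
      Matrix.smul_mulVec,
      Matrix.smul_mulVec, Matrix.one_mulVec, Matrix.one_mulVec, dotProduct_add,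
      dotProduct_add, dotProduct_smul, dotProduct_smul, transpose_dot, smul_eq_mul, smul_eq_mul]
    ring
  rw [hq]
  have h1 := dot_mulVec_le A a b
  have h2 := dot_mulVec_le A a (-b)
  have hnb : (-b) ⬝ᵥ (-b) = b ⬝ᵥ b := by simp
  rw [hnb, neg_dotProduct] at h2
  have sa0 : 0 ≤ Real.sqrt (a ⬝ᵥ a) := Real.sqrt_nonneg _
  have sb0 : 0 ≤ Real.sqrt (b ⬝ᵥ b) := Real.sqrt_nonneg _
  have ha0 : 0 ≤ a ⬝ᵥ a := by
    simp only [dotProduct]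
    exact Finset.sum_nonneg fun i _ => mul_self_nonneg _
  have hb0 : 0 ≤ b ⬝ᵥ b := by
    simp only [dotProduct]
    exact Finset.sum_nonneg fun i _ => mul_self_nonneg _
  have hsa : Real.sqrt (a ⬝ᵥ a) ^ 2 = a ⬝ᵥ a := Real.sq_sqrt ha0
  have hsb : Real.sqrt (b ⬝ᵥ b) ^ 2 = b ⬝ᵥ b := Real.sq_sqrt hb0
  have hN0 : 0 ≤ matrixSpectralNorm A := norm_nonneg _
  nlinarith [sq_nonneg (Real.sqrt (a ⬝ᵥ a) - Real.sqrt (b ⬝ᵥ b)),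
    mul_nonneg (sub_nonneg.2 hA) (mul_nonneg sa0 sb0)]

/-- `O(1/k)` ergodic rate of PDHG for `L(x,λ) = f(x) - λᵀAx - g*(λ)` with
`0 < η ≤ 1/‖A‖₂`. -/
theorem ergodic_rate_pdhg {n m : ℕ} (f : (Fin n → ℝ) → ℝ) (gs : (Fin m → ℝ) → ℝ)
    (hf : ConvexOn ℝ Set.univ f) (hgs : ConvexOn ℝ Set.univ gs)
    (A : Matrix (Fin m) (Fin n) ℝ) (η : ℝ) (hη : 0 < η) (hηA : η ≤ 1 / matrixSpectralNorm A)
    (L : (Fin n → ℝ) → (Fin m → ℝ) → ℝ)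
    (hL : ∀ x lam, L x lam = f x - lam ⬝ᵥ (A *ᵥ x) - gs lam)
    (P : Matrix (Fin n ⊕ Fin m) (Fin n ⊕ Fin m) ℝ)
    (hPdef : P = fromBlocks ((1/η) • (1 : Matrix (Fin n) (Fin n) ℝ)) Aᵀ A
      ((1/η) • (1 : Matrix (Fin m) (Fin m) ℝ)))
    (xs : ℕ → Fin n → ℝ) (ls : ℕ → Fin m → ℝ)
    (hstep : ∀ k, ∃ gf gg, IsSubgradAt f (xs (k+1)) gf ∧ IsSubgradAt gs (ls (k+1)) gg ∧
      P *ᵥ (Sum.elim (xs k) (ls k) - Sum.elim (xs (k+1)) (ls (k+1)))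
        = Sum.elim (gf - Aᵀ *ᵥ ls (k+1)) (gg + A *ᵥ xs (k+1)))
    (k : ℕ) (hk : 1 ≤ k) (x : Fin n → ℝ) (lam : Fin m → ℝ) :
    L ((k : ℝ)⁻¹ • ∑ i ∈ range k, xs (i+1)) lam
      - L x ((k : ℝ)⁻¹ • ∑ i ∈ range k, ls (i+1))
      ≤ ((Sum.elim x lam - Sum.elim (xs 0) (ls 0))
          ⬝ᵥ (P *ᵥ (Sum.elim x lam - Sum.elim (xs 0) (ls 0)))) / (2 * k) := by
  -- spectral norm bound
  have hN0 : 0 ≤ matrixSpectralNorm A := norm_nonneg _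
  have hAle : matrixSpectralNorm A ≤ 1 / η := by
    rcases eq_or_lt_of_le hN0 with h0 | hpos
    · rw [← h0]; positivity
    · have h1 : η * matrixSpectralNorm A ≤ 1 := (le_div_iff₀ hpos).mp hηA
      rw [le_div_iff₀ hη]
      linarith
  have hPsd : ∀ u, 0 ≤ u ⬝ᵥ (P *ᵥ u) := by
    intro u; rw [hPdef]; exact psd_quad A η hAle u
  have hPt : Pᵀ = P := by
    rw [hPdef, Matrix.fromBlocks_transpose]
    simp [Matrix.transpose_smul]
  have hsymm : ∀ u v, u ⬝ᵥ (P *ᵥ v) = v ⬝ᵥ (P *ᵥ u) := by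
    intro u v
    rw [Matrix.dotProduct_mulVec]
    conv_lhs => rw [← hPt]
    rw [Matrix.vecMul_transpose, dotProduct_comm]
  have hid : ∀ w u v : Fin n ⊕ Fin m → ℝ,
      2 * ((v - w) ⬝ᵥ (P *ᵥ (u - v)))
        = (w - u) ⬝ᵥ (P *ᵥ (w - u)) - (w - v) ⬝ᵥ (P *ᵥ (w - v))
          - (u - v) ⬝ᵥ (P *ᵥ (u - v)) := by
    intro w u v
    simp only [Matrix.mulVec_sub, sub_dotProduct, dotProduct_sub]
    have h1 := hsymm w u
    have h2 := hsymm w v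
    have h3 := hsymm u v
    ring_nf
    linarith
  -- abbreviation
  let D : ℕ → ℝ := fun i =>
    (Sum.elim x lam - Sum.elim (xs i) (ls i)) ⬝ᵥ
      (P *ᵥ (Sum.elim x lam - Sum.elim (xs i) (ls i)))
  -- per-step inequality
  have hstep2 : ∀ i, L (xs (i+1)) lam - L x (ls (i+1)) ≤ (D i - D (i+1)) / 2 := by
    intro i
    obtain ⟨gf, gg, hgf, hgg, hPeq⟩ := hstep i
    have hz1 : Sum.elim (xs (i+1)) (ls (i+1)) - Sum.elim x lam
        = Sum.elim (xs (i+1) - x) (ls (i+1) - lam) := by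
      funext j; cases j <;> simp
    have hkey : L (xs (i+1)) lam - L x (ls (i+1))
        ≤ (Sum.elim (xs (i+1)) (ls (i+1)) - Sum.elim x lam) ⬝ᵥ
          (P *ᵥ (Sum.elim (xs i) (ls i) - Sum.elim (xs (i+1)) (ls (i+1)))) := by
      rw [hPeq, hz1, sumElim_dotProduct_sumElim, hL, hL]
      have hf1 := hgf x
      have hg1 := hgg lam
      simp only [dotProduct_sub] at hf1 hg1
      simp only [sub_dotProduct, dotProduct_sub, dotProduct_add]
      have t1 := transpose_dot A x (ls (i+1))
      have t2 := transpose_dot A (xs (i+1)) (ls (i+1))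
      have c1 := dotProduct_comm gf x
      have c2 := dotProduct_comm gf (xs (i+1))
      have c3 := dotProduct_comm gg lam
      have c4 := dotProduct_comm gg (ls (i+1))
      linarith
    have hid' := hid (Sum.elim x lam) (Sum.elim (xs i) (ls i))
      (Sum.elim (xs (i+1)) (ls (i+1)))
    have hq := hPsd (Sum.elim (xs i) (ls i) - Sum.elim (xs (i+1)) (ls (i+1)))
    have hDi : D i = (Sum.elim x lam - Sum.elim (xs i) (ls i)) ⬝ᵥ
        (P *ᵥ (Sum.elim x lam - Sum.elim (xs i) (ls i))) := rfl
    have hDi1 : D (i+1) = (Sum.elim x lam - Sum.elim (xs (i+1)) (ls (i+1))) ⬝ᵥ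
        (P *ᵥ (Sum.elim x lam - Sum.elim (xs (i+1)) (ls (i+1)))) := rfl
    rw [hDi, hDi1]
    linarith
  -- telescoping sum
  have hsum : ∑ i ∈ range k, (L (xs (i+1)) lam - L x (ls (i+1))) ≤ D 0 / 2 := by
    calc ∑ i ∈ range k, (L (xs (i+1)) lam - L x (ls (i+1)))
        ≤ ∑ i ∈ range k, (D i - D (i+1)) / 2 :=
          Finset.sum_le_sum fun i _ => hstep2 i
      _ = (∑ i ∈ range k, (D i - D (i+1))) / 2 := by rw [Finset.sum_div]
      _ = (D 0 - D k) / 2 := by rw [Finset.sum_range_sub' D k]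
      _ ≤ D 0 / 2 := by
          have := hPsd (Sum.elim x lam - Sum.elim (xs k) (ls k))
          have hDk : D k = (Sum.elim x lam - Sum.elim (xs k) (ls k)) ⬝ᵥ
            (P *ᵥ (Sum.elim x lam - Sum.elim (xs k) (ls k))) := rfl
          linarith [hDk ▸ this]
  -- Jensen and linearity
  have hkpos : (0:ℝ) < k := by
    have : (1:ℝ) ≤ k := by exact_mod_cast hk
    linarith
  have hkne : (k:ℝ) ≠ 0 := ne_of_gt hkpos
  have hwsum : ∑ _i ∈ range k, (k:ℝ)⁻¹ = 1 := by
    rw [Finset.sum_const, Finset.card_range, nsmul_eq_mul, mul_inv_cancel₀ hkne]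
  have hjf : f ((k:ℝ)⁻¹ • ∑ i ∈ range k, xs (i+1))
      ≤ (k:ℝ)⁻¹ * ∑ i ∈ range k, f (xs (i+1)) := by
    rw [Finset.smul_sum, Finset.mul_sum]
    have := hf.map_sum_le (t := range k) (w := fun _ => (k:ℝ)⁻¹) (p := fun i => xs (i+1))
      (fun i _ => by positivity) hwsum (fun i _ => Set.mem_univ _)
    simpa [smul_eq_mul] using this
  have hjg : gs ((k:ℝ)⁻¹ • ∑ i ∈ range k, ls (i+1))
      ≤ (k:ℝ)⁻¹ * ∑ i ∈ range k, gs (ls (i+1)) := by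
    rw [Finset.smul_sum, Finset.mul_sum]
    have := hgs.map_sum_le (t := range k) (w := fun _ => (k:ℝ)⁻¹) (p := fun i => ls (i+1))
      (fun i _ => by positivity) hwsum (fun i _ => Set.mem_univ _)
    simpa [smul_eq_mul] using this
  have hlin1 : lam ⬝ᵥ (A *ᵥ ((k:ℝ)⁻¹ • ∑ i ∈ range k, xs (i+1)))
      = (k:ℝ)⁻¹ * ∑ i ∈ range k, lam ⬝ᵥ (A *ᵥ xs (i+1)) := by
    rw [Matrix.mulVec_smul, dotProduct_smul, smul_eq_mul]
    congr 1
    have hAsum : A *ᵥ (∑ i ∈ range k, xs (i+1)) = ∑ i ∈ range k, A *ᵥ xs (i+1) := by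
      exact map_sum (Matrix.mulVecLin A) (fun i => xs (i+1)) (range k)
    rw [hAsum]
    simp only [dotProduct, Finset.sum_apply, Finset.mul_sum]
    exact Finset.sum_comm
  have hlin2 : ((k:ℝ)⁻¹ • ∑ i ∈ range k, ls (i+1)) ⬝ᵥ (A *ᵥ x)
      = (k:ℝ)⁻¹ * ∑ i ∈ range k, ls (i+1) ⬝ᵥ (A *ᵥ x) := by
    rw [smul_dotProduct, smul_eq_mul]
    congr 1
    simp only [dotProduct, Finset.sum_apply, Finset.sum_mul]
    exact Finset.sum_comm
  -- final assembly
  simp only [hL] at hsum ⊢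
  simp only [Finset.sum_sub_distrib, Finset.sum_const, Finset.card_range,
    nsmul_eq_mul] at hsum
  show _ ≤ D 0 / (2 * (k:ℝ))
  calc f ((k:ℝ)⁻¹ • ∑ i ∈ range k, xs (i+1))
        - lam ⬝ᵥ (A *ᵥ ((k:ℝ)⁻¹ • ∑ i ∈ range k, xs (i+1))) - gs lam
        - (f x - ((k:ℝ)⁻¹ • ∑ i ∈ range k, ls (i+1)) ⬝ᵥ (A *ᵥ x)
          - gs ((k:ℝ)⁻¹ • ∑ i ∈ range k, ls (i+1)))
      ≤ (k:ℝ)⁻¹ * (∑ i ∈ range k, f (xs (i+1)))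
        - (k:ℝ)⁻¹ * (∑ i ∈ range k, lam ⬝ᵥ (A *ᵥ xs (i+1))) - gs lam
        - (f x - (k:ℝ)⁻¹ * (∑ i ∈ range k, ls (i+1) ⬝ᵥ (A *ᵥ x))
          - (k:ℝ)⁻¹ * (∑ i ∈ range k, gs (ls (i+1)))) := by
        rw [hlin1, hlin2]
        linarith [hjf, hjg]
    _ = (k:ℝ)⁻¹ * ((∑ i ∈ range k, f (xs (i+1)))
          - (∑ i ∈ range k, lam ⬝ᵥ (A *ᵥ xs (i+1))) - (k:ℝ) * gs lam
          - ((k:ℝ) * f x - (∑ i ∈ range k, ls (i+1) ⬝ᵥ (A *ᵥ x))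
            - (∑ i ∈ range k, gs (ls (i+1))))) := by
        field_simp
    _ ≤ (k:ℝ)⁻¹ * (D 0 / 2) := by
        apply mul_le_mul_of_nonneg_left _ (by positivity)
        linarith [hsum]
    _ = D 0 / (2 * (k:ℝ)) := by
        rw [inv_mul_eq_div, div_div, mul_comm (2:ℝ)]
end

section
/- Ergodic rate of ADMM: for any η > 0, the ADMM ergodic averages (ȳ^k, x̄^k, λ̄^k) satisfy L(x̄^k, ȳ^k, λ) - L(x, y, λ̄^k) ≤ ‖z - z^0‖²_P / (2k) for every (y, x, λ), where L(x, y, λ) = f(x) + g(y) - λᵀ(Ax + By - b) and P = [[0,0,0],[0, ηAᵀA, -Aᵀ],[0, -A, (1/η)I]]. -/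
open Matrix Finset

lemma dot_self_nonneg' {α : Type*} [Fintype α] (v : α → ℝ) : 0 ≤ v ⬝ᵥ v :=
  Finset.sum_nonneg fun _ _ => mul_self_nonneg _

lemma tdot {m n : ℕ} (A : Matrix (Fin m) (Fin n) ℝ) (u : Fin m → ℝ) (v : Fin n → ℝ) :
    (Aᵀ *ᵥ u) ⬝ᵥ v = u ⬝ᵥ (A *ᵥ v) := by
  rw [mulVec_transpose, ← dotProduct_mulVec]

lemma elim_sub {α β : Type*} (a c : α → ℝ) (b d : β → ℝ) :
    Sum.elim a b - Sum.elim c d = Sum.elim (a - c) (b - d) := by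
  funext z; cases z <;> simp

lemma dot_sum {α : Type*} [Fintype α] (v : α → ℝ) (s : Finset ℕ) (f : ℕ → α → ℝ) :
    v ⬝ᵥ (∑ i ∈ s, f i) = ∑ i ∈ s, v ⬝ᵥ f i := by
  simp [dotProduct, Finset.mul_sum, Finset.sum_apply]
  exact Finset.sum_comm

lemma sum_dot {α : Type*} [Fintype α] (v : α → ℝ) (s : Finset ℕ) (f : ℕ → α → ℝ) :
    (∑ i ∈ s, f i) ⬝ᵥ v = ∑ i ∈ s, f i ⬝ᵥ v := by
  simp [dotProduct, Finset.sum_mul, Finset.sum_apply]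
  exact Finset.sum_comm

lemma mulVec_sum' {m n : ℕ} (A : Matrix (Fin m) (Fin n) ℝ) (s : Finset ℕ) (f : ℕ → Fin n → ℝ) :
    A *ᵥ (∑ i ∈ s, f i) = ∑ i ∈ s, A *ᵥ f i := by
  funext j
  simp [mulVec, dotProduct, Finset.mul_sum, Finset.sum_apply]
  exact Finset.sum_comm

noncomputable def Phi {m n : ℕ} (η : ℝ) (A : Matrix (Fin m) (Fin n) ℝ)
    (v : Fin n → ℝ) (w : Fin m → ℝ) (v' : Fin n → ℝ) (w' : Fin m → ℝ) : ℝ :=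
  η * ((A *ᵥ v) ⬝ᵥ (A *ᵥ v')) - (A *ᵥ v) ⬝ᵥ w' - (A *ᵥ v') ⬝ᵥ w + (1/η) * (w ⬝ᵥ w')

lemma Phi_self_nonneg {m n : ℕ} {η : ℝ} (hη : 0 < η) (A : Matrix (Fin m) (Fin n) ℝ)
    (v : Fin n → ℝ) (w : Fin m → ℝ) : 0 ≤ Phi η A v w v w := by
  have h0 := dot_self_nonneg' (η • (A *ᵥ v) - w)
  have hexp : (η • (A *ᵥ v) - w) ⬝ᵥ (η • (A *ᵥ v) - w)
      = η^2 * ((A *ᵥ v) ⬝ᵥ (A *ᵥ v)) - 2*η*((A *ᵥ v) ⬝ᵥ w) + w ⬝ᵥ w := by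
    simp [dotProduct_sub, sub_dotProduct, smul_dotProduct, dotProduct_smul,
      dotProduct_comm w (A *ᵥ v)]
    ring
  have hPhi : Phi η A v w v w = (1/η) * ((η • (A *ᵥ v) - w) ⬝ᵥ (η • (A *ᵥ v) - w)) := by
    rw [hexp]
    unfold Phi
    field_simp
    ring
  rw [hPhi]
  positivity

lemma Phi_key {m n : ℕ} {η : ℝ} (hη : 0 < η) (A : Matrix (Fin m) (Fin n) ℝ)
    (v v' v₀ : Fin n → ℝ) (w w' w₀ : Fin m → ℝ) :
    Phi η A (v' - v) (w' - w) (v₀ - v') (w₀ - w') ≤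
      (Phi η A (v - v₀) (w - w₀) (v - v₀) (w - w₀)
        - Phi η A (v - v') (w - w') (v - v') (w - w')) / 2 := by
  have h0 := Phi_self_nonneg hη A (v₀ - v') (w₀ - w')
  have hid : Phi η A (v' - v) (w' - w) (v₀ - v') (w₀ - w')
      = (Phi η A (v - v₀) (w - w₀) (v - v₀) (w - w₀)
        - Phi η A (v - v') (w - w') (v - v') (w - w')
        - Phi η A (v₀ - v') (w₀ - w') (v₀ - v') (w₀ - w')) / 2 := by
    simp only [Phi, mulVec_sub, dotProduct_sub, sub_dotProduct]
    rw [dotProduct_comm (A *ᵥ v₀) (A *ᵥ v), dotProduct_comm (A *ᵥ v') (A *ᵥ v),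
        dotProduct_comm (A *ᵥ v₀) (A *ᵥ v'), dotProduct_comm w₀ w, dotProduct_comm w' w,
        dotProduct_comm w₀ w']
    ring
  linarith

/-- `O(1/k)` ergodic rate of ADMM for `L(x,y,λ) = f(x) + g(y) - λᵀ(Ax+By-b)`. -/
theorem ergodic_rate_admm {p n m : ℕ} (f : (Fin n → ℝ) → ℝ) (g : (Fin p → ℝ) → ℝ)
    (hf : ConvexOn ℝ Set.univ f) (hg : ConvexOn ℝ Set.univ g)
    (A : Matrix (Fin m) (Fin n) ℝ) (B : Matrix (Fin m) (Fin p) ℝ) (b : Fin m → ℝ)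
    (η : ℝ) (hη : 0 < η)
    (L : (Fin n → ℝ) → (Fin p → ℝ) → (Fin m → ℝ) → ℝ)
    (hL : ∀ x y lam, L x y lam = f x + g y - lam ⬝ᵥ (A *ᵥ x + B *ᵥ y - b))
    (P : Matrix (Fin p ⊕ (Fin n ⊕ Fin m)) (Fin p ⊕ (Fin n ⊕ Fin m)) ℝ)
    (hPdef : P = fromBlocks (0 : Matrix (Fin p) (Fin p) ℝ)
      (0 : Matrix (Fin p) (Fin n ⊕ Fin m) ℝ) (0 : Matrix (Fin n ⊕ Fin m) (Fin p) ℝ)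
      (fromBlocks (η • (Aᵀ * A)) (-Aᵀ) (-A) ((1/η) • (1 : Matrix (Fin m) (Fin m) ℝ))))
    (ys : ℕ → Fin p → ℝ) (xs : ℕ → Fin n → ℝ) (ls : ℕ → Fin m → ℝ)
    (hstep : ∀ k, ∃ gg gf, IsSubgradAt g (ys (k+1)) gg ∧ IsSubgradAt f (xs (k+1)) gf ∧
      P *ᵥ (Sum.elim (ys k) (Sum.elim (xs k) (ls k))
          - Sum.elim (ys (k+1)) (Sum.elim (xs (k+1)) (ls (k+1))))
        = Sum.elim (gg - Bᵀ *ᵥ ls (k+1))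
            (Sum.elim (gf - Aᵀ *ᵥ ls (k+1)) (A *ᵥ xs (k+1) + B *ᵥ ys (k+1) - b)))
    (k : ℕ) (hk : 1 ≤ k) (x : Fin n → ℝ) (y : Fin p → ℝ) (lam : Fin m → ℝ) :
    L ((k : ℝ)⁻¹ • ∑ i ∈ range k, xs (i+1)) ((k : ℝ)⁻¹ • ∑ i ∈ range k, ys (i+1)) lam
      - L x y ((k : ℝ)⁻¹ • ∑ i ∈ range k, ls (i+1))
      ≤ ((Sum.elim y (Sum.elim x lam) - Sum.elim (ys 0) (Sum.elim (xs 0) (ls 0)))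
          ⬝ᵥ (P *ᵥ (Sum.elim y (Sum.elim x lam)
            - Sum.elim (ys 0) (Sum.elim (xs 0) (ls 0))))) / (2 * k) := by
  have hkpos : (0:ℝ) < (k:ℝ) := by exact_mod_cast hk
  -- the quadratic form in terms of Phi
  set D : ℕ → ℝ := fun j => Phi η A (x - xs j) (lam - ls j) (x - xs j) (lam - ls j) with hD
  have hZd : (Sum.elim y (Sum.elim x lam) - Sum.elim (ys 0) (Sum.elim (xs 0) (ls 0)))
      ⬝ᵥ (P *ᵥ (Sum.elim y (Sum.elim x lam) - Sum.elim (ys 0) (Sum.elim (xs 0) (ls 0))))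
      = D 0 := by
    rw [elim_sub, elim_sub, hPdef, fromBlocks_mulVec, fromBlocks_mulVec]
    simp only [zero_mulVec, zero_add, add_zero, Sum.elim_comp_inl, Sum.elim_comp_inr]
    rw [sumElim_dotProduct_sumElim, sumElim_dotProduct_sumElim]
    simp only [smul_mulVec, neg_mulVec, one_mulVec, ← mulVec_mulVec,
      dotProduct_smul, dotProduct_neg, dotProduct_add, dotProduct_zero, smul_eq_mul]
    rw [dotProduct_comm (x - xs 0) (Aᵀ *ᵥ (A *ᵥ (x - xs 0)))]
    rw [tdot, dotProduct_comm (x - xs 0) (Aᵀ *ᵥ (lam - ls 0)), tdot]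
    simp only [Phi, hD]
    rw [dotProduct_comm (A *ᵥ (x - xs 0)) (lam - ls 0)]
    ring
  have hstep' : ∀ i, L (xs (i+1)) (ys (i+1)) lam - L x y (ls (i+1)) ≤ (D i - D (i+1)) / 2 := by
    intro i
    obtain ⟨gg, gf, hgg, hgf, heq⟩ := hstep i
    rw [elim_sub, elim_sub, hPdef, fromBlocks_mulVec] at heq
    simp only [zero_mulVec, zero_add, add_zero, Sum.elim_comp_inl, Sum.elim_comp_inr,
      fromBlocks_mulVec] at heq
    have h1 : (0 : Fin p → ℝ) = gg - Bᵀ *ᵥ ls (i+1) :=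
      funext fun j => congrFun heq (Sum.inl j)
    have h2 : η • (Aᵀ *ᵥ (A *ᵥ (xs i - xs (i+1)))) - Aᵀ *ᵥ (ls i - ls (i+1))
        = gf - Aᵀ *ᵥ ls (i+1) := by
      funext j
      have := congrFun heq (Sum.inr (Sum.inl j))
      simpa [smul_mulVec, neg_mulVec, ← mulVec_mulVec, sub_eq_add_neg] using this
    have h3 : -(A *ᵥ (xs i - xs (i+1))) + (1/η) • (ls i - ls (i+1))
        = A *ᵥ xs (i+1) + B *ᵥ ys (i+1) - b := by
      funext j
      have := congrFun heq (Sum.inr (Sum.inr j))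
      simpa [neg_mulVec, smul_mulVec, one_mulVec] using this
    have hggv : gg = Bᵀ *ᵥ ls (i+1) := by
      have := h1.symm
      rwa [sub_eq_zero] at this
    have hgfv : gf = Aᵀ *ᵥ ls (i+1) + (η • (Aᵀ *ᵥ (A *ᵥ (xs i - xs (i+1))))
        - Aᵀ *ᵥ (ls i - ls (i+1))) := by
      rw [h2]; ring_nf
    have hfq := hgf x
    have hgq := hgg y
    have key : L (xs (i+1)) (ys (i+1)) lam - L x y (ls (i+1))
        ≤ Phi η A (xs (i+1) - x) (ls (i+1) - lam) (xs i - xs (i+1)) (ls i - ls (i+1)) := by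
      have hT : - (gf ⬝ᵥ (x - xs (i+1))) - gg ⬝ᵥ (y - ys (i+1))
            - lam ⬝ᵥ (A *ᵥ xs (i+1) + B *ᵥ ys (i+1) - b)
            + ls (i+1) ⬝ᵥ (A *ᵥ x + B *ᵥ y - b)
          = Phi η A (xs (i+1) - x) (ls (i+1) - lam) (xs i - xs (i+1)) (ls i - ls (i+1)) := by
        have he1 : ls (i+1) ⬝ᵥ (A *ᵥ xs (i+1) + B *ᵥ ys (i+1) - b)
            = ls (i+1) ⬝ᵥ (-(A *ᵥ (xs i - xs (i+1))) + (1/η) • (ls i - ls (i+1))) := by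
          rw [h3]
        have he2 : lam ⬝ᵥ (A *ᵥ xs (i+1) + B *ᵥ ys (i+1) - b)
            = lam ⬝ᵥ (-(A *ᵥ (xs i - xs (i+1))) + (1/η) • (ls i - ls (i+1))) := by
          rw [h3]
        rw [hggv, hgfv]
        simp only [Phi, tdot, add_dotProduct, sub_dotProduct, dotProduct_sub, dotProduct_add,
          smul_dotProduct, dotProduct_smul, mulVec_sub, mulVec_add, neg_dotProduct,
          dotProduct_neg, smul_eq_mul] at he1 he2 ⊢
        simp only [dotProduct_comm] at he1 he2 ⊢
        linarith [he1, he2]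
      rw [hL, hL, ← hT]
      linarith
    have hkey2 := Phi_key hη A x (xs (i+1)) (xs i) lam (ls (i+1)) (ls i)
    calc L (xs (i+1)) (ys (i+1)) lam - L x y (ls (i+1))
        ≤ Phi η A (xs (i+1) - x) (ls (i+1) - lam) (xs i - xs (i+1)) (ls i - ls (i+1)) := key
      _ ≤ (D i - D (i+1)) / 2 := hkey2
  have hk0 : (k:ℝ) ≠ 0 := hkpos.ne'
  -- telescoping sum
  have hsum : ∑ i ∈ range k, (L (xs (i+1)) (ys (i+1)) lam - L x y (ls (i+1))) ≤ D 0 / 2 := by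
    have h1 : ∑ i ∈ range k, (L (xs (i+1)) (ys (i+1)) lam - L x y (ls (i+1)))
        ≤ ∑ i ∈ range k, (D i - D (i+1)) / 2 := Finset.sum_le_sum fun i _ => hstep' i
    have h2 : ∑ i ∈ range k, (D i - D (i+1)) / 2 = (D 0 - D k) / 2 := by
      rw [← Finset.sum_div, Finset.sum_range_sub' D k]
    have h3 : 0 ≤ D k := Phi_self_nonneg hη A _ _
    linarith
  -- Jensen
  have hw : ∀ i ∈ range k, (0:ℝ) ≤ (k:ℝ)⁻¹ := fun _ _ => by positivity
  have hw1 : ∑ _i ∈ range k, (k:ℝ)⁻¹ = 1 := by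
    rw [Finset.sum_const, card_range, nsmul_eq_mul, mul_inv_cancel₀ hk0]
  have hfx : f ((k:ℝ)⁻¹ • ∑ i ∈ range k, xs (i+1))
      ≤ (k:ℝ)⁻¹ * ∑ i ∈ range k, f (xs (i+1)) := by
    have := ConvexOn.map_sum_le (p := fun i => xs (i+1)) hf hw hw1 (fun _ _ => Set.mem_univ _)
    simpa [Finset.smul_sum, smul_eq_mul, Finset.mul_sum] using this
  have hgy : g ((k:ℝ)⁻¹ • ∑ i ∈ range k, ys (i+1))
      ≤ (k:ℝ)⁻¹ * ∑ i ∈ range k, g (ys (i+1)) := by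
    have := ConvexOn.map_sum_le (p := fun i => ys (i+1)) hg hw hw1 (fun _ _ => Set.mem_univ _)
    simpa [Finset.smul_sum, smul_eq_mul, Finset.mul_sum] using this
  -- linearity of the multiplier terms
  have hlam : lam ⬝ᵥ (A *ᵥ ((k:ℝ)⁻¹ • ∑ i ∈ range k, xs (i+1))
        + B *ᵥ ((k:ℝ)⁻¹ • ∑ i ∈ range k, ys (i+1)) - b)
      = (k:ℝ)⁻¹ * ∑ i ∈ range k, lam ⬝ᵥ (A *ᵥ xs (i+1) + B *ᵥ ys (i+1) - b) := by
    simp only [dotProduct_sub, dotProduct_add, Finset.sum_sub_distrib, Finset.sum_add_distrib,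
      Finset.sum_const, card_range, nsmul_eq_mul, mulVec_smul, dotProduct_smul, smul_eq_mul,
      mulVec_sum', dot_sum]
    field_simp
  have hlambar : ((k:ℝ)⁻¹ • ∑ i ∈ range k, ls (i+1)) ⬝ᵥ (A *ᵥ x + B *ᵥ y - b)
      = (k:ℝ)⁻¹ * ∑ i ∈ range k, ls (i+1) ⬝ᵥ (A *ᵥ x + B *ᵥ y - b) := by
    rw [smul_dotProduct, sum_dot, smul_eq_mul]
  set Sf := ∑ i ∈ range k, f (xs (i+1)) with hSfd
  set Sg := ∑ i ∈ range k, g (ys (i+1)) with hSgd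
  set Sl1 := ∑ i ∈ range k, lam ⬝ᵥ (A *ᵥ xs (i+1) + B *ᵥ ys (i+1) - b) with hSl1d
  set Sl2 := ∑ i ∈ range k, ls (i+1) ⬝ᵥ (A *ᵥ x + B *ᵥ y - b) with hSl2d
  have hSL : ∑ i ∈ range k, (L (xs (i+1)) (ys (i+1)) lam - L x y (ls (i+1)))
      = Sf + Sg - Sl1 - (k:ℝ)*(f x + g y) + Sl2 := by
    simp only [hL, hSfd, hSgd, hSl1d, hSl2d, Finset.sum_sub_distrib, Finset.sum_add_distrib,
      Finset.sum_const, card_range, nsmul_eq_mul]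
    ring
  have hsum' : Sf + Sg - Sl1 - (k:ℝ)*(f x + g y) + Sl2 ≤ D 0 / 2 := by
    rw [← hSL]; exact hsum
  rw [hL, hL, hlam, hlambar, hZd]
  calc f ((k:ℝ)⁻¹ • ∑ i ∈ range k, xs (i+1)) + g ((k:ℝ)⁻¹ • ∑ i ∈ range k, ys (i+1))
        - (k:ℝ)⁻¹ * Sl1 - (f x + g y - (k:ℝ)⁻¹ * Sl2)
      ≤ (k:ℝ)⁻¹*Sf + (k:ℝ)⁻¹*Sg - (k:ℝ)⁻¹ * Sl1 - (f x + g y - (k:ℝ)⁻¹ * Sl2) := by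
        linarith
    _ = (k:ℝ)⁻¹ * (Sf + Sg - Sl1 - (k:ℝ)*(f x + g y) + Sl2) := by
        field_simp
        ring
    _ ≤ (k:ℝ)⁻¹ * (D 0 / 2) := by
        exact mul_le_mul_of_nonneg_left hsum' (by positivity)
    _ = D 0 / (2*k) := by
        ring
end

section
/- Linearized generic rate: suppose iterates satisfy P(z^k - z^{k+1}) = F^{k+1} for PSD matrix P, where for each k and all z = (x, λ): L(x^{k+1}, λ) - L(x, λ^{k+1}) ≤ ⟨F^{k+1}, z^{k+1} - z⟩ + (1/2)‖z^k - z^{k+1}‖²_E for some PSD matrix E with P ⪰ E. Then the ergodic averages satisfy L(x̄^k, λ) - L(x, λ̄^k) ≤ ‖z - z^0‖²_P / (2k). -/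
open Matrix Finset

/-- `O(1/k)` ergodic rate of the linearized generic update `P(z^k - z^{k+1}) = F^{k+1}`
under the approximation condition with an error matrix `E ⪯ P`. -/
theorem ergodic_rate_linearized {n m : ℕ} (L : (Fin n → ℝ) → (Fin m → ℝ) → ℝ)
    (hcvx : ∀ lam, ConvexOn ℝ Set.univ (fun x => L x lam))
    (hccv : ∀ x, ConcaveOn ℝ Set.univ (fun lam => L x lam))
    (P E : Matrix (Fin n ⊕ Fin m) (Fin n ⊕ Fin m) ℝ)
    (hP : P.PosSemidef) (hE : E.PosSemidef) (hPE : (P - E).PosSemidef)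
    (xs : ℕ → Fin n → ℝ) (ls : ℕ → Fin m → ℝ) (F : ℕ → Fin n ⊕ Fin m → ℝ)
    (hupdate : ∀ k, P *ᵥ (Sum.elim (xs k) (ls k) - Sum.elim (xs (k+1)) (ls (k+1)))
      = F (k+1))
    (hgap : ∀ k (x : Fin n → ℝ) (lam : Fin m → ℝ),
      L (xs (k+1)) lam - L x (ls (k+1))
        ≤ F (k+1) ⬝ᵥ (Sum.elim (xs (k+1)) (ls (k+1)) - Sum.elim x lam)
          + (1/2) * ((Sum.elim (xs k) (ls k) - Sum.elim (xs (k+1)) (ls (k+1)))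
              ⬝ᵥ (E *ᵥ (Sum.elim (xs k) (ls k) - Sum.elim (xs (k+1)) (ls (k+1))))))
    (k : ℕ) (hk : 1 ≤ k) (x : Fin n → ℝ) (lam : Fin m → ℝ) :
    L ((k : ℝ)⁻¹ • ∑ i ∈ range k, xs (i+1)) lam
      - L x ((k : ℝ)⁻¹ • ∑ i ∈ range k, ls (i+1))
      ≤ ((Sum.elim x lam - Sum.elim (xs 0) (ls 0))
          ⬝ᵥ (P *ᵥ (Sum.elim x lam - Sum.elim (xs 0) (ls 0)))) / (2 * k) := by
  set z : Fin n ⊕ Fin m → ℝ := Sum.elim x lam with hz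
  set zs : ℕ → Fin n ⊕ Fin m → ℝ := fun i => Sum.elim (xs i) (ls i) with hzs
  -- symmetry of dot products with P
  have hsym : ∀ (u v : Fin n ⊕ Fin m → ℝ), u ⬝ᵥ (P *ᵥ v) = v ⬝ᵥ (P *ᵥ u) := by
    intro u v
    have hPt : Pᵀ = P := hP.isHermitian
    rw [Matrix.dotProduct_mulVec, ← Matrix.mulVec_transpose, hPt, dotProduct_comm]
  -- quadratic identity
  have hquad : ∀ (a b : Fin n ⊕ Fin m → ℝ),
      (a - b) ⬝ᵥ (P *ᵥ b)
        = 1/2 * (a ⬝ᵥ (P *ᵥ a)) - 1/2 * (b ⬝ᵥ (P *ᵥ b))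
          - 1/2 * ((a - b) ⬝ᵥ (P *ᵥ (a - b))) := by
    intro a b
    have h1 := hsym a b
    simp only [Matrix.mulVec_sub, sub_dotProduct, dotProduct_sub]
    linarith
  -- quadratic forms nonneg
  have hPnn : ∀ v, 0 ≤ v ⬝ᵥ (P *ᵥ v) := fun v => by simpa using hP.dotProduct_mulVec_nonneg v
  have hPEnn : ∀ v, 0 ≤ v ⬝ᵥ (P *ᵥ v) - v ⬝ᵥ (E *ᵥ v) := by
    intro v
    have := hPE.dotProduct_mulVec_nonneg v
    simpa [Matrix.sub_mulVec, dotProduct_sub] using this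
  -- per-step bound
  have hstep : ∀ i, L (xs (i+1)) lam - L x (ls (i+1))
      ≤ 1/2 * ((z - zs i) ⬝ᵥ (P *ᵥ (z - zs i)))
        - 1/2 * ((z - zs (i+1)) ⬝ᵥ (P *ᵥ (z - zs (i+1)))) := by
    intro i
    have h1 := hgap i x lam
    rw [← hupdate i] at h1
    have hdot : (P *ᵥ (zs i - zs (i+1))) ⬝ᵥ (zs (i+1) - z)
        = ((zs i - z) - (zs (i+1) - z)) ⬝ᵥ (P *ᵥ (zs (i+1) - z)) := by
      rw [dotProduct_comm, hsym]
      congr 1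
      abel
    have hid := hquad (zs i - z) (zs (i+1) - z)
    have hd : (zs i - z) - (zs (i+1) - z) = zs i - zs (i+1) := by abel
    rw [hd] at hid
    have hflip : ∀ w : Fin n ⊕ Fin m → ℝ, ∀ M : Matrix (Fin n ⊕ Fin m) (Fin n ⊕ Fin m) ℝ,
        (z - w) ⬝ᵥ (M *ᵥ (z - w)) = (w - z) ⬝ᵥ (M *ᵥ (w - z)) := by
      intro w M
      have h : z - w = -(w - z) := by abel
      rw [h, Matrix.mulVec_neg, dotProduct_neg, neg_dotProduct, neg_neg]
    have hE' := hPEnn (zs i - zs (i+1))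
    calc L (xs (i+1)) lam - L x (ls (i+1))
        ≤ (P *ᵥ (zs i - zs (i+1))) ⬝ᵥ (zs (i+1) - z)
            + 1/2 * ((zs i - zs (i+1)) ⬝ᵥ (E *ᵥ (zs i - zs (i+1)))) := h1
      _ = 1/2 * ((zs i - z) ⬝ᵥ (P *ᵥ (zs i - z)))
            - 1/2 * ((zs (i+1) - z) ⬝ᵥ (P *ᵥ (zs (i+1) - z)))
            - 1/2 * ((zs i - zs (i+1)) ⬝ᵥ (P *ᵥ (zs i - zs (i+1))))
            + 1/2 * ((zs i - zs (i+1)) ⬝ᵥ (E *ᵥ (zs i - zs (i+1)))) := by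
          rw [hdot, hd, hid]
      _ ≤ 1/2 * ((zs i - z) ⬝ᵥ (P *ᵥ (zs i - z)))
            - 1/2 * ((zs (i+1) - z) ⬝ᵥ (P *ᵥ (zs (i+1) - z))) := by linarith
      _ = 1/2 * ((z - zs i) ⬝ᵥ (P *ᵥ (z - zs i)))
            - 1/2 * ((z - zs (i+1)) ⬝ᵥ (P *ᵥ (z - zs (i+1)))) := by
          rw [hflip (zs i) P, hflip (zs (i+1)) P]
  -- sum telescopes
  have hsum : ∑ i ∈ range k, (L (xs (i+1)) lam - L x (ls (i+1)))
      ≤ 1/2 * ((z - zs 0) ⬝ᵥ (P *ᵥ (z - zs 0))) := by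
    calc ∑ i ∈ range k, (L (xs (i+1)) lam - L x (ls (i+1)))
        ≤ ∑ i ∈ range k, (1/2 * ((z - zs i) ⬝ᵥ (P *ᵥ (z - zs i)))
            - 1/2 * ((z - zs (i+1)) ⬝ᵥ (P *ᵥ (z - zs (i+1))))) :=
          Finset.sum_le_sum fun i _ => hstep i
      _ = 1/2 * ((z - zs 0) ⬝ᵥ (P *ᵥ (z - zs 0)))
            - 1/2 * ((z - zs k) ⬝ᵥ (P *ᵥ (z - zs k))) :=
          Finset.sum_range_sub' (fun i => 1/2 * ((z - zs i) ⬝ᵥ (P *ᵥ (z - zs i)))) k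
      _ ≤ 1/2 * ((z - zs 0) ⬝ᵥ (P *ᵥ (z - zs 0))) := by
          have := hPnn (z - zs k); linarith
  have hkpos : (0:ℝ) < k := by exact_mod_cast hk
  -- Jensen
  have hw0 : ∀ i ∈ range k, (0:ℝ) ≤ (k:ℝ)⁻¹ := fun _ _ => by positivity
  have hw1 : ∑ _i ∈ range k, (k:ℝ)⁻¹ = 1 := by
    rw [Finset.sum_const, Finset.card_range, nsmul_eq_mul, mul_inv_cancel₀ (ne_of_gt hkpos)]
  have hmem1 : ∀ i ∈ range k, xs (i+1) ∈ Set.univ := fun _ _ => Set.mem_univ _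
  have hmem2 : ∀ i ∈ range k, ls (i+1) ∈ Set.univ := fun _ _ => Set.mem_univ _
  have hJ1 : L ((k : ℝ)⁻¹ • ∑ i ∈ range k, xs (i+1)) lam
      ≤ ∑ i ∈ range k, (k:ℝ)⁻¹ • L (xs (i+1)) lam := by
    have := (hcvx lam).map_sum_le hw0 hw1 hmem1
    simpa [Finset.smul_sum] using this
  have hJ2 : ∑ i ∈ range k, (k:ℝ)⁻¹ • L x (ls (i+1))
      ≤ L x ((k : ℝ)⁻¹ • ∑ i ∈ range k, ls (i+1)) := by
    have := (hccv x).le_map_sum hw0 hw1 hmem2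
    simpa [Finset.smul_sum] using this
  have hmain : L ((k : ℝ)⁻¹ • ∑ i ∈ range k, xs (i+1)) lam
      - L x ((k : ℝ)⁻¹ • ∑ i ∈ range k, ls (i+1))
      ≤ (k:ℝ)⁻¹ * ∑ i ∈ range k, (L (xs (i+1)) lam - L x (ls (i+1))) := by
    have h1 : (k:ℝ)⁻¹ * ∑ i ∈ range k, (L (xs (i+1)) lam - L x (ls (i+1)))
        = ∑ i ∈ range k, (k:ℝ)⁻¹ • L (xs (i+1)) lam
          - ∑ i ∈ range k, (k:ℝ)⁻¹ • L x (ls (i+1)) := by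
      rw [Finset.mul_sum, ← Finset.sum_sub_distrib]
      congr 1; ext i; simp [smul_eq_mul]; ring
    rw [h1]
    linarith
  have h2 : (k:ℝ)⁻¹ * ∑ i ∈ range k, (L (xs (i+1)) lam - L x (ls (i+1)))
      ≤ (k:ℝ)⁻¹ * (1/2 * ((z - zs 0) ⬝ᵥ (P *ᵥ (z - zs 0)))) := by
    apply mul_le_mul_of_nonneg_left hsum (by positivity)
  have : (k:ℝ)⁻¹ * (1/2 * ((z - zs 0) ⬝ᵥ (P *ᵥ (z - zs 0))))
      = ((z - zs 0) ⬝ᵥ (P *ᵥ (z - zs 0))) / (2 * k) := by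
    have hk0 : (k:ℝ) ≠ 0 := ne_of_gt hkpos
    set Q : ℝ := (z - zs 0) ⬝ᵥ (P *ᵥ (z - zs 0)) with hQ
    rw [eq_div_iff (by positivity : (2*(k:ℝ)) ≠ 0)]
    rw [show ((k:ℝ))⁻¹ * (1/2*Q) * (2*(k:ℝ)) = ((k:ℝ)⁻¹*(k:ℝ))*Q by ring,
      inv_mul_cancel₀ hk0, one_mul]
  rw [this] at h2
  exact le_trans hmain h2
end

section
/- Key approximation inequality for linearized PDHG: if f and g* are convex and L-smooth, and L(x,λ) = f(x) - λᵀAx - g*(λ), then for iterates z^k = (x^k, λ^k) and F^{k+1} = (∇f(x^k) - Aᵀλ^{k+1}, ∇g*(λ^k) + Ax^{k+1}), for any z = (x, λ): L(x^{k+1}, λ) - L(x, λ^{k+1}) ≤ ⟨F^{k+1}, z^{k+1} - z⟩ + (L/2)‖z^k - z^{k+1}‖². -/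
open Matrix

/-- Key approximation inequality for linearized PDHG: with
`F^{k+1} = (∇f(x^k) - Aᵀλ^{k+1}, ∇g*(λ^k) + Ax^{k+1})`,
`L(x^{k+1},λ) - L(x,λ^{k+1}) ≤ ⟨F^{k+1}, z^{k+1} - z⟩ + (L/2)‖z^k - z^{k+1}‖²`. -/
theorem linearized_pdhg_gap_bound {n m : ℕ} (f : (Fin n → ℝ) → ℝ)
    (gs : (Fin m → ℝ) → ℝ) (Df : (Fin n → ℝ) → (Fin n → ℝ))
    (Dg : (Fin m → ℝ) → (Fin m → ℝ)) (Lc : ℝ)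
    (hfconv : ∀ x y, f x + Df x ⬝ᵥ (y - x) ≤ f y)
    (hfsmooth : ∀ x y, f y ≤ f x + Df x ⬝ᵥ (y - x) + (Lc/2) * ((y - x) ⬝ᵥ (y - x)))
    (hgconv : ∀ u v, gs u + Dg u ⬝ᵥ (v - u) ≤ gs v)
    (hgsmooth : ∀ u v, gs v ≤ gs u + Dg u ⬝ᵥ (v - u) + (Lc/2) * ((v - u) ⬝ᵥ (v - u)))
    (A : Matrix (Fin m) (Fin n) ℝ)
    (L : (Fin n → ℝ) → (Fin m → ℝ) → ℝ)
    (hL : ∀ x lam, L x lam = f x - lam ⬝ᵥ (A *ᵥ x) - gs lam)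
    (xk xk1 : Fin n → ℝ) (lk lk1 : Fin m → ℝ) (x : Fin n → ℝ) (lam : Fin m → ℝ) :
    L xk1 lam - L x lk1
      ≤ (Sum.elim (Df xk - Aᵀ *ᵥ lk1) (Dg lk + A *ᵥ xk1))
          ⬝ᵥ (Sum.elim xk1 lk1 - Sum.elim x lam)
        + (Lc/2) * ((Sum.elim xk lk - Sum.elim xk1 lk1)
            ⬝ᵥ (Sum.elim xk lk - Sum.elim xk1 lk1)) := by

  have h1 := hfsmooth xk xk1
  have h2 := hfconv xk x
  have h3 := hgsmooth lk lk1
  have h4 := hgconv lk lam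
  have e0 : Sum.elim xk1 lk1 - Sum.elim x lam
      = Sum.elim (xk1 - x) (lk1 - lam) := by
    funext i; cases i <;> rfl
  have e1 : Sum.elim xk lk - Sum.elim xk1 lk1
      = Sum.elim (xk - xk1) (lk - lk1) := by
    funext i; cases i <;> rfl
  rw [hL, hL, e0, e1, sumElim_dotProduct_sumElim,
    sumElim_dotProduct_sumElim]
  have s1 : Df xk ⬝ᵥ (xk1 - x) = Df xk ⬝ᵥ (xk1 - xk) - Df xk ⬝ᵥ (x - xk) := by
    rw [← dotProduct_sub, sub_sub_sub_cancel_right]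
  have s2 : Dg lk ⬝ᵥ (lk1 - lam) = Dg lk ⬝ᵥ (lk1 - lk) - Dg lk ⬝ᵥ (lam - lk) := by
    rw [← dotProduct_sub, sub_sub_sub_cancel_right]
  have b1 : (Df xk - Aᵀ *ᵥ lk1) ⬝ᵥ (xk1 - x)
      = Df xk ⬝ᵥ (xk1 - xk) - Df xk ⬝ᵥ (x - xk)
        - (lk1 ⬝ᵥ (A *ᵥ xk1) - lk1 ⬝ᵥ (A *ᵥ x)) := by
    simp only [sub_dotProduct, Matrix.mulVec_transpose,
      ← Matrix.dotProduct_mulVec, Matrix.mulVec_sub, dotProduct_sub]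
    ring
  have b2 : (Dg lk + A *ᵥ xk1) ⬝ᵥ (lk1 - lam)
      = Dg lk ⬝ᵥ (lk1 - lk) - Dg lk ⬝ᵥ (lam - lk)
        + ((A *ᵥ xk1) ⬝ᵥ lk1 - (A *ᵥ xk1) ⬝ᵥ lam) := by
    simp only [add_dotProduct, dotProduct_sub]
    ring
  have c1 : lk1 ⬝ᵥ (A *ᵥ xk1) = (A *ᵥ xk1) ⬝ᵥ lk1 := dotProduct_comm _ _
  have c2 : lam ⬝ᵥ (A *ᵥ xk1) = (A *ᵥ xk1) ⬝ᵥ lam := dotProduct_comm _ _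
  have d1 : (xk - xk1) ⬝ᵥ (xk - xk1) = (xk1 - xk) ⬝ᵥ (xk1 - xk) := by
    rw [show xk - xk1 = -(xk1 - xk) by abel, neg_dotProduct,
      dotProduct_neg, neg_neg]
  have d2 : (lk - lk1) ⬝ᵥ (lk - lk1) = (lk1 - lk) ⬝ᵥ (lk1 - lk) := by
    rw [show lk - lk1 = -(lk1 - lk) by abel, neg_dotProduct,
      dotProduct_neg, neg_neg]
  rw [b1, b2, c1, c2, d1, d2]
  nlinarith [h1, h2, h3, h4]
end

section
/- Inexact generic rate: suppose iterates satisfy P(z^k - z^{k+1}) + ε^{k+1} ∈ F(z^{k+1}) with P PSD, where all iterates and the comparison point z lie in a bounded set Z of diameter D. Then L(x̄^k, λ) - L(x, λ̄^k) ≤ ‖z - z^0‖²_P/(2k) + (D/k)∑_{i=1}^k ‖ε^i‖₂ for all z = (x, λ) ∈ Z. -/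
open Matrix Finset

/-- Euclidean norm of a vector. -/
noncomputable def evnorm {ι : Type*} [Fintype ι] (u : ι → ℝ) : ℝ := Real.sqrt (u ⬝ᵥ u)

lemma dotProduct_self_nonneg' {ι : Type*} [Fintype ι] (u : ι → ℝ) : 0 ≤ u ⬝ᵥ u :=
  Finset.sum_nonneg fun i _ => mul_self_nonneg _

lemma evnorm_nonneg {ι : Type*} [Fintype ι] (u : ι → ℝ) : 0 ≤ evnorm u :=
  Real.sqrt_nonneg _

lemma dot_le_evnorm {ι : Type*} [Fintype ι] (u v : ι → ℝ) :
    u ⬝ᵥ v ≤ evnorm u * evnorm v := by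
  have h1 : (u ⬝ᵥ v) ^ 2 ≤ (u ⬝ᵥ u) * (v ⬝ᵥ v) := by
    have := Finset.sum_mul_sq_le_sq_mul_sq Finset.univ u v
    simpa [dotProduct, sq, mul_comm, mul_left_comm] using this
  calc u ⬝ᵥ v ≤ |u ⬝ᵥ v| := le_abs_self _
    _ = Real.sqrt ((u ⬝ᵥ v) ^ 2) := (Real.sqrt_sq_eq_abs _).symm
    _ ≤ Real.sqrt ((u ⬝ᵥ u) * (v ⬝ᵥ v)) := Real.sqrt_le_sqrt h1
    _ = evnorm u * evnorm v := Real.sqrt_mul (dotProduct_self_nonneg' u) _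

lemma sum_elim_sub {α : Type*} {n m : ℕ} [SubtractionMonoid α]
    (a c : Fin n → α) (b d : Fin m → α) :
    Sum.elim a b - Sum.elim c d = Sum.elim (a - c) (b - d) := by
  funext u; cases u <;> simp


/-- Ergodic rate of the inexact generic update
`P(z^k - z^{k+1}) + ε^{k+1} ∈ F(z^{k+1})` over a bounded set `Z` of diameter `D`. -/
theorem ergodic_rate_inexact {n m : ℕ} (L : (Fin n → ℝ) → (Fin m → ℝ) → ℝ)
    (hcvx : ∀ lam, ConvexOn ℝ Set.univ (fun x => L x lam))
    (hccv : ∀ x, ConcaveOn ℝ Set.univ (fun lam => L x lam))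
    (P : Matrix (Fin n ⊕ Fin m) (Fin n ⊕ Fin m) ℝ) (hP : P.PosSemidef)
    (Z : Set (Fin n ⊕ Fin m → ℝ)) (D : ℝ)
    (hdiam : ∀ u ∈ Z, ∀ v ∈ Z, evnorm (u - v) ≤ D)
    (xs : ℕ → Fin n → ℝ) (ls : ℕ → Fin m → ℝ) (eps : ℕ → Fin n ⊕ Fin m → ℝ)
    (hmem : ∀ k, Sum.elim (xs k) (ls k) ∈ Z)
    (hstep : ∀ k, ∃ gx gl,
      IsSubgradAt (fun x => L x (ls (k+1))) (xs (k+1)) gx ∧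
      IsSubgradAt (fun l => -L (xs (k+1)) l) (ls (k+1)) gl ∧
      P *ᵥ (Sum.elim (xs k) (ls k) - Sum.elim (xs (k+1)) (ls (k+1))) + eps (k+1)
        = Sum.elim gx gl)
    (k : ℕ) (hk : 1 ≤ k) (x : Fin n → ℝ) (lam : Fin m → ℝ)
    (hz : Sum.elim x lam ∈ Z) :
    L ((k : ℝ)⁻¹ • ∑ i ∈ range k, xs (i+1)) lam
      - L x ((k : ℝ)⁻¹ • ∑ i ∈ range k, ls (i+1))
      ≤ ((Sum.elim x lam - Sum.elim (xs 0) (ls 0))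
          ⬝ᵥ (P *ᵥ (Sum.elim x lam - Sum.elim (xs 0) (ls 0)))) / (2 * k)
        + (D / k) * ∑ i ∈ range k, evnorm (eps (i+1)) := by
  set z : Fin n ⊕ Fin m → ℝ := Sum.elim x lam with hzdef
  set zk : ℕ → Fin n ⊕ Fin m → ℝ := fun i => Sum.elim (xs i) (ls i) with hzkdef
  set Q : (Fin n ⊕ Fin m → ℝ) → ℝ := fun v => v ⬝ᵥ (P *ᵥ v) with hQdef
  have hPT : Pᵀ = P := by simpa using hP.1.eq
  have hsymm : ∀ a b : Fin n ⊕ Fin m → ℝ, a ⬝ᵥ (P *ᵥ b) = (P *ᵥ a) ⬝ᵥ b := by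
    intro a b
    rw [dotProduct_mulVec]
    congr 1
    rw [← hPT, Matrix.vecMul_transpose, hPT]
  have hQnonneg : ∀ v, 0 ≤ Q v := by
    intro v
    have := hP.dotProduct_mulVec_nonneg v
    simpa [hQdef] using this
  have hpolar : ∀ a b : Fin n ⊕ Fin m → ℝ,
      (P *ᵥ a) ⬝ᵥ b = (Q (a + b) - Q a - Q b) / 2 := by
    intro a b
    have : Q (a + b) = Q a + Q b + 2 * ((P *ᵥ a) ⬝ᵥ b) := by
      simp only [hQdef, Matrix.mulVec_add, dotProduct_add, add_dotProduct]
      have h1 := hsymm a b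
      have h2 := dotProduct_comm b (P *ᵥ a)
      linarith
    linarith
  have hknz : (k : ℝ) ≠ 0 := by positivity
  have hkpos : (0:ℝ) < k := by positivity
  -- per-step inequality
  have hstep' : ∀ i, L (xs (i+1)) lam - L x (ls (i+1))
      ≤ (Q (zk i - z) - Q (zk (i+1) - z)) / 2 + D * evnorm (eps (i+1)) := by
    intro i
    obtain ⟨gx, gl, hgx, hgl, heq⟩ := hstep i
    have h1 := hgx x
    have h2 := hgl lam
    simp only at h1 h2
    have e1 : gx ⬝ᵥ (x - xs (i+1)) = -(gx ⬝ᵥ (xs (i+1) - x)) := by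
      rw [← neg_sub, dotProduct_neg]
    have e2 : gl ⬝ᵥ (lam - ls (i+1)) = -(gl ⬝ᵥ (ls (i+1) - lam)) := by
      rw [← neg_sub, dotProduct_neg]
    have key : L (xs (i+1)) lam - L x (ls (i+1))
        ≤ Sum.elim gx gl ⬝ᵥ (zk (i+1) - z) := by
      have : zk (i+1) - z = Sum.elim (xs (i+1) - x) (ls (i+1) - lam) := by
        rw [hzkdef, hzdef]; exact sum_elim_sub _ _ _ _
      rw [this, sumElim_dotProduct_sumElim]
      rw [e1] at h1; rw [e2] at h2
      linarith
    rw [← heq, add_dotProduct] at key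
    have hb : (P *ᵥ (zk i - zk (i+1))) ⬝ᵥ (zk (i+1) - z)
        ≤ (Q (zk i - z) - Q (zk (i+1) - z)) / 2 := by
      rw [hpolar]
      have habc : zk i - zk (i+1) + (zk (i+1) - z) = zk i - z := by abel
      rw [habc]
      have := hQnonneg (zk i - zk (i+1))
      linarith
    have he : eps (i+1) ⬝ᵥ (zk (i+1) - z) ≤ D * evnorm (eps (i+1)) := by
      have h1 := dot_le_evnorm (eps (i+1)) (zk (i+1) - z)
      have h2 : evnorm (zk (i+1) - z) ≤ D := hdiam _ (hmem (i+1)) _ hz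
      have h3 := evnorm_nonneg (eps (i+1))
      calc eps (i+1) ⬝ᵥ (zk (i+1) - z) ≤ evnorm (eps (i+1)) * evnorm (zk (i+1) - z) := h1
        _ ≤ evnorm (eps (i+1)) * D := by
            exact mul_le_mul_of_nonneg_left h2 h3
        _ = D * evnorm (eps (i+1)) := mul_comm _ _
    linarith
  -- sum the per-step inequalities
  have hsum : ∑ i ∈ range k, (L (xs (i+1)) lam - L x (ls (i+1)))
      ≤ Q (z - zk 0) / 2 + D * ∑ i ∈ range k, evnorm (eps (i+1)) := by
    have h1 : ∑ i ∈ range k, (L (xs (i+1)) lam - L x (ls (i+1)))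
        ≤ ∑ i ∈ range k, ((Q (zk i - z) - Q (zk (i+1) - z)) / 2 + D * evnorm (eps (i+1))) :=
      Finset.sum_le_sum fun i _ => hstep' i
    have h2 : ∑ i ∈ range k, ((Q (zk i - z) - Q (zk (i+1) - z)) / 2 + D * evnorm (eps (i+1)))
        = (Q (zk 0 - z) - Q (zk k - z)) / 2 + D * ∑ i ∈ range k, evnorm (eps (i+1)) := by
      rw [Finset.sum_add_distrib, Finset.mul_sum]
      congr 1
      rw [← Finset.sum_div, Finset.sum_range_sub' (fun i => Q (zk i - z))]
    have h3 : Q (zk 0 - z) = Q (z - zk 0) := by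
      have heq : zk 0 - z = -(z - zk 0) := by abel
      simp only [hQdef, heq, Matrix.mulVec_neg, neg_dotProduct, dotProduct_neg,
        neg_neg]
    have h4 := hQnonneg (zk k - z)
    rw [h2, h3] at h1
    linarith
  -- Jensen
  have hw : ∑ _i ∈ range k, (k:ℝ)⁻¹ = 1 := by
    rw [Finset.sum_const, Finset.card_range, nsmul_eq_mul, mul_inv_cancel₀ hknz]
  have hJ1 : L ((k : ℝ)⁻¹ • ∑ i ∈ range k, xs (i+1)) lam
      ≤ (k:ℝ)⁻¹ * ∑ i ∈ range k, L (xs (i+1)) lam := by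
    have := (hcvx lam).map_sum_le (t := range k) (w := fun _ => (k:ℝ)⁻¹)
      (p := fun i => xs (i+1)) (fun i _ => by positivity) hw (fun i _ => Set.mem_univ _)
    simpa [Finset.smul_sum, smul_eq_mul, Finset.mul_sum] using this
  have hJ2 : (k:ℝ)⁻¹ * ∑ i ∈ range k, L x (ls (i+1))
      ≤ L x ((k : ℝ)⁻¹ • ∑ i ∈ range k, ls (i+1)) := by
    have := (hccv x).le_map_sum (t := range k) (w := fun _ => (k:ℝ)⁻¹)
      (p := fun i => ls (i+1)) (fun i _ => by positivity) hw (fun i _ => Set.mem_univ _)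
    simpa [Finset.smul_sum, smul_eq_mul, Finset.mul_sum] using this
  have hmain : L ((k : ℝ)⁻¹ • ∑ i ∈ range k, xs (i+1)) lam
      - L x ((k : ℝ)⁻¹ • ∑ i ∈ range k, ls (i+1))
      ≤ (k:ℝ)⁻¹ * (Q (z - zk 0) / 2 + D * ∑ i ∈ range k, evnorm (eps (i+1))) := by
    have hs : (k:ℝ)⁻¹ * ∑ i ∈ range k, (L (xs (i+1)) lam - L x (ls (i+1)))
        ≤ (k:ℝ)⁻¹ * (Q (z - zk 0) / 2 + D * ∑ i ∈ range k, evnorm (eps (i+1))) :=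
      mul_le_mul_of_nonneg_left hsum (by positivity)
    rw [Finset.sum_sub_distrib, mul_sub] at hs
    linarith
  calc L ((k : ℝ)⁻¹ • ∑ i ∈ range k, xs (i+1)) lam
      - L x ((k : ℝ)⁻¹ • ∑ i ∈ range k, ls (i+1))
      ≤ (k:ℝ)⁻¹ * (Q (z - zk 0) / 2 + D * ∑ i ∈ range k, evnorm (eps (i+1))) := hmain
    _ = Q (z - zk 0) / (2 * k) + (D / k) * ∑ i ∈ range k, evnorm (eps (i+1)) := by
        field_simp
    _ = ((Sum.elim x lam - Sum.elim (xs 0) (ls 0))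
          ⬝ᵥ (P *ᵥ (Sum.elim x lam - Sum.elim (xs 0) (ls 0)))) / (2 * k)
        + (D / k) * ∑ i ∈ range k, evnorm (eps (i+1)) := rfl
end
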